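/- Let p ≥ 5 be a prime with p ≡ 2 (mod 3) and let G be a finite abelian group of order n divisible by p (type I(p)), with p the smallest such prime. Then G has at least 2^{μ(G)/2} maximal distinct sum-free subsets, where μ(G) = n(p+1)/(3p). -/

import Mathlib

/-- `S` is distinct sum-free: it contains no triple of pairwise-distinct elements
`x, y, z` with `x + y = z`. -/
def IsDistSumFree {G : Type*} [AddCommGroup G] (S : Set G) : Prop :=
  ∀ x ∈ S, ∀ y ∈ S, ∀ z ∈ S, x ≠ y → x ≠ z → y ≠ z → x + y ≠ z

/-- `S` is a maximal distinct sum-free subset of `G`. -/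
def IsMaxDistSumFree {G : Type*} [AddCommGroup G] (S : Set G) : Prop :=
  IsDistSumFree S ∧ ∀ T : Set G, IsDistSumFree T → S ⊆ T → S = T

section Aux

open Function

/-- A finite abelian group whose order is divisible by a prime `p` admits a
surjective homomorphism onto `ZMod p`. -/
lemma exists_surj_aux13 (G : Type*) [AddCommGroup G] [Fintype G] (p : ℕ) (hp : p.Prime)
    (hdvd : p ∣ Fintype.card G) : ∃ φ : G →+ ZMod p, Function.Surjective φ := by
  haveI : Fact p.Prime := ⟨hp⟩
  obtain ⟨g, hg⟩ := exists_prime_addOrderOf_dvd_card p hdvd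
  set H : AddSubgroup G := (nsmulAddMonoidHom p : G →+ G).range with hH
  haveI : Module (ZMod p) (G ⧸ H) := QuotientAddGroup.zmodModule (by
    intro x; exact ⟨x, rfl⟩)
  haveI : Nontrivial (G ⧸ H) := by
    by_contra h
    rw [not_nontrivial_iff_subsingleton] at h
    have hsurj : Function.Surjective (fun x : G => p • x) := by
      intro y
      have : (y : G ⧸ H) = 0 := Subsingleton.elim _ _
      obtain ⟨x, hx⟩ := (QuotientAddGroup.eq_zero_iff y).mp this
      exact ⟨x, hx⟩
    have hinj := Finite.injective_iff_surjective.mpr hsurj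
    have h1 : p • g = p • (0 : G) := by
      rw [smul_zero, ← hg]; exact addOrderOf_nsmul_eq_zero g
    have := hinj h1
    rw [this] at hg
    simp [addOrderOf_zero] at hg
    exact hp.one_lt.ne' hg.symm
  let b := Module.Free.chooseBasis (ZMod p) (G ⧸ H)
  obtain ⟨i⟩ := b.index_nonempty
  refine ⟨(b.coord i).toAddMonoidHom.comp (QuotientAddGroup.mk' H), ?_⟩
  apply Function.Surjective.comp (g := b.coord i)
  · intro c
    exact ⟨c • b i, by simp⟩
  · exact QuotientAddGroup.mk'_surjective H

lemma card_preimage_aux13 {G : Type*} [AddCommGroup G] [Fintype G] {p : ℕ} [NeZero p]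
    (φ : G →+ ZMod p) (hφ : Function.Surjective φ) (M : Set (ZMod p)) :
    Nat.card (φ ⁻¹' M) = Nat.card M * Nat.card φ.ker := by
  have hs : ∀ m : ZMod p, φ (surjInv hφ m) = m := surjInv_eq hφ
  have e : φ ⁻¹' M ≃ M × φ.ker := by
    refine ⟨fun x => (⟨φ x, x.2⟩, ⟨x.1 - surjInv hφ (φ x.1), ?_⟩),
           fun mk => ⟨surjInv hφ mk.1 + mk.2, ?_⟩, ?_, ?_⟩
    · simp [AddMonoidHom.mem_ker, hs]
    · have h2 : φ mk.2.1 = 0 := mk.2.2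
      simp only [Set.mem_preimage, map_add, hs, h2, add_zero]
      exact mk.1.2
    · intro x
      ext
      simp
    · rintro ⟨⟨m, hm⟩, ⟨k, hk⟩⟩
      have h2 : φ k = 0 := hk
      ext <;> simp [hs, h2]
  rw [Nat.card_congr e, Nat.card_prod]

lemma card_ker_aux13 {G : Type*} [AddCommGroup G] [Fintype G] {p : ℕ} [NeZero p]
    (φ : G →+ ZMod p) (hφ : Function.Surjective φ) :
    Nat.card φ.ker * p = Fintype.card G := by
  have h1 := AddSubgroup.card_eq_card_quotient_mul_card_addSubgroup (s := φ.ker)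
  have e : (G ⧸ φ.ker) ≃+ ZMod p := QuotientAddGroup.quotientKerEquivOfSurjective φ hφ
  rw [← Nat.card_eq_fintype_card, h1, Nat.card_congr e.toEquiv, Nat.card_zmod, mul_comm]

lemma card_M_aux13 {p k : ℕ} (hpk : p = 3 * k + 2) :
    Nat.card {x : ZMod p | k + 1 ≤ x.val ∧ x.val ≤ 2 * k + 1} = k + 1 := by
  haveI : NeZero p := ⟨by omega⟩
  have e : Fin (k + 1) ≃ {x : ZMod p | k + 1 ≤ x.val ∧ x.val ≤ 2 * k + 1} := by
    refine Equiv.ofBijective (fun j => ⟨((k + 1 + (j : ℕ) : ℕ) : ZMod p), ?_⟩) ⟨?_, ?_⟩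
    · have := j.2
      have hv : ((k + 1 + (j : ℕ) : ℕ) : ZMod p).val = k + 1 + (j : ℕ) :=
        ZMod.val_natCast_of_lt (by omega)
      simp only [Set.mem_setOf_eq, hv]
      omega
    · intro a b hab
      have h1 := congrArg (fun x => (x : {x : ZMod p // _}).1.val) hab
      simp only [ZMod.val_natCast_of_lt (by omega : k + 1 + (a:ℕ) < p),
        ZMod.val_natCast_of_lt (by omega : k + 1 + (b:ℕ) < p)] at h1
      exact Fin.ext (by omega)
    · rintro ⟨x, hx1, hx2⟩
      refine ⟨⟨x.val - (k + 1), by omega⟩, ?_⟩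
      ext
      simp only
      rw [show k + 1 + (x.val - (k+1)) = x.val by omega, ZMod.natCast_val, ZMod.cast_id]
  rw [← Nat.card_congr e, Nat.card_eq_fintype_card, Fintype.card_fin]

variable {p k : ℕ} (hpk : p = 3 * k + 2)

include hpk in
lemma mod_helper_aux13 {a b : ℕ} (ha2 : a ≤ 2 * k + 1) (hb2 : b ≤ 2 * k + 1) :
    (a + b) % p = if a + b < p then a + b else a + b - p := by
  split
  · exact Nat.mod_eq_of_lt ‹_›
  · rw [Nat.mod_eq_sub_mod (by omega), Nat.mod_eq_of_lt (by omega)]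

include hpk in
lemma M_sumfree_aux13 {x y : ZMod p}
    (hx : k + 1 ≤ x.val ∧ x.val ≤ 2 * k + 1) (hy : k + 1 ≤ y.val ∧ y.val ≤ 2 * k + 1) :
    ¬(k + 1 ≤ (x + y).val ∧ (x + y).val ≤ 2 * k + 1) := by
  haveI : NeZero p := ⟨by omega⟩
  rw [ZMod.val_add, mod_helper_aux13 hpk hx.2 hy.2]
  split <;> omega

include hpk in
lemma M_neg_aux13 {x : ZMod p}
    (hx : k + 1 ≤ x.val ∧ x.val ≤ 2 * k + 1) :
    k + 1 ≤ (-x).val ∧ (-x).val ≤ 2 * k + 1 := by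
  haveI : NeZero p := ⟨by omega⟩
  have hx0 : x ≠ 0 := by
    intro h; rw [h, ZMod.val_zero] at hx; omega
  rw [ZMod.neg_val, if_neg hx0]
  have := x.val_lt
  omega

include hpk in
lemma M_add_self_aux13 (hodd : p % 2 = 1) {x : ZMod p}
    (hx : k + 1 ≤ x.val ∧ x.val ≤ 2 * k + 1) : x + x ≠ 0 := by
  haveI : NeZero p := ⟨by omega⟩
  intro h
  have h1 : (x + x).val = 0 := by rw [h, ZMod.val_zero]
  rw [ZMod.val_add, mod_helper_aux13 hpk hx.2 hx.2] at h1
  split at h1 <;> omega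

lemma exists_max_ext_aux13 {G : Type*} [AddCommGroup G] [Fintype G] {S : Set G}
    (hS : IsDistSumFree S) : ∃ T, S ⊆ T ∧ IsMaxDistSumFree T := by
  obtain ⟨T, ⟨hT, hST⟩, hmax⟩ := Set.Finite.exists_maximalFor id
    {T : Set G | IsDistSumFree T ∧ S ⊆ T} (Set.toFinite _) ⟨S, hS, subset_rfl⟩
  exact ⟨T, hST, hT, fun T' hT' h => Set.Subset.antisymm h (hmax ⟨hT', hST.trans h⟩ h)⟩

end Aux

/-- if `G` is a finite abelian group of order `n` of type I(p)
(`p ≥ 5` prime, `p ≡ 2 (mod 3)`, `p ∣ n`, and `p` the smallest such prime), then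
`G` has at least `2^{μ(G)/2}` maximal distinct sum-free subsets, where
`μ(G) = n(p+1)/(3p)`. -/
theorem stmt13 (G : Type*) [AddCommGroup G] [Fintype G] (p : ℕ) (hp : p.Prime)
    (hp5 : 5 ≤ p) (hp3 : p % 3 = 2) (hdvd : p ∣ Fintype.card G)
    (hmin : ∀ q : ℕ, q.Prime → q % 3 = 2 → q ∣ Fintype.card G → p ≤ q) :
    (2 : ℝ) ^ (((Fintype.card G : ℝ) * (p + 1) / (3 * p)) / 2) ≤
      Nat.card {S : Set G // IsMaxDistSumFree S} := by
  classical
  haveI : NeZero p := ⟨by omega⟩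
  obtain ⟨φ, hφ⟩ := exists_surj_aux13 G p hp hdvd
  set k := p / 3 with hk
  have hpk : p = 3 * k + 2 := by omega
  have hodd : p % 2 = 1 := by
    have h2 : ¬ (2 ∣ p) := fun h => by
      have := (Nat.prime_dvd_prime_iff_eq Nat.prime_two hp).mp h
      omega
    omega
  set M : Set (ZMod p) := {x : ZMod p | k + 1 ≤ x.val ∧ x.val ≤ 2 * k + 1} with hM
  set B : Set G := φ ⁻¹' M with hB
  -- membership characterization
  have hmemB : ∀ x : G, x ∈ B ↔ (k + 1 ≤ (φ x).val ∧ (φ x).val ≤ 2 * k + 1) := by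
    intro x; rfl
  -- properties of B
  have hBsf : ∀ x ∈ B, ∀ y ∈ B, x + y ∉ B := by
    intro x hx y hy hxy
    rw [hmemB] at hx hy hxy
    rw [map_add] at hxy
    exact M_sumfree_aux13 hpk hx hy hxy
  have hBneg : ∀ x ∈ B, -x ∈ B := by
    intro x hx
    rw [hmemB] at hx ⊢
    rw [map_neg]
    exact M_neg_aux13 hpk hx
  have hB0 : (0 : G) ∉ B := by
    rw [hmemB, map_zero, ZMod.val_zero]
    omega
  have hBnn : ∀ x ∈ B, x ≠ -x := by
    intro x hx h
    rw [hmemB] at hx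
    refine M_add_self_aux13 hpk hodd hx ?_
    have hxx : x + x = 0 := by nth_rewrite 2 [h]; exact add_neg_cancel x
    rw [← map_add, hxx, map_zero]
  -- cardinality of B
  have hcardB : Nat.card B = (k + 1) * Nat.card φ.ker := by
    rw [hB, card_preimage_aux13 φ hφ M, hM, card_M_aux13 hpk]
  have hn : Nat.card φ.ker * p = Fintype.card G := card_ker_aux13 φ hφ
  -- representatives of the ± pairs
  let e := Fintype.equivFin G
  set R : Set G := {x | x ∈ B ∧ e x < e (-x)} with hR
  have hRB : R ⊆ B := fun x hx => hx.1
  have hRnotneg : ∀ x ∈ R, -x ∉ R := by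
    intro x hx hnx
    have h1 := hx.2
    have h2 := hnx.2
    rw [neg_neg] at h2
    omega
  have hBR : ∀ x ∈ B, x ∉ R → -x ∈ R := by
    intro x hx hxr
    refine ⟨hBneg x hx, ?_⟩
    rw [neg_neg]
    have h1 : ¬ (e x < e (-x)) := fun hlt => hxr ⟨hx, hlt⟩
    have h2 : e x ≠ e (-x) := fun heq => hBnn x hx (e.injective heq)
    omega
  -- B splits into R and -R
  have hsplit : B = R ∪ (Neg.neg '' R) := by
    ext x
    constructor
    · intro hx
      by_cases hxr : x ∈ R
      · exact Or.inl hxr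
      · exact Or.inr ⟨-x, hBR x hx hxr, neg_neg x⟩
    · rintro (hx | ⟨y, hy, rfl⟩)
      · exact hRB hx
      · exact hBneg y (hRB hy)
  have hdisj : Disjoint R (Neg.neg '' R) := by
    rw [Set.disjoint_left]
    rintro x hx ⟨y, hy, rfl⟩
    exact hRnotneg y hy hx
  have hcardBR : Nat.card B = 2 * Nat.card R := by
    rw [Nat.card_coe_set_eq, Nat.card_coe_set_eq, hsplit,
      Set.ncard_union_eq hdisj (Set.toFinite _) (Set.toFinite _),
      Set.ncard_image_of_injective _ neg_injective]
    ring
  -- the 2^|R| distinct sum-free sets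
  let pick : (R → Bool) → R → G := fun f x => if f x then (x : G) else -(x : G)
  have hpickB : ∀ f (x : R), pick f x ∈ B := by
    intro f x
    dsimp only [pick]
    split
    · exact hRB x.2
    · exact hBneg _ (hRB x.2)
  have hpick0 : ∀ f (x : R), pick f x ≠ 0 := fun f x h => hB0 (h ▸ hpickB f x)
  let S : (R → Bool) → Set G := fun f => insert (0 : G) (Set.range (pick f))
  have hSdsf : ∀ f, IsDistSumFree (S f) := by
    intro f x hx y hy z hz hxy hxz hyz hsum
    rcases Set.mem_insert_iff.mp hx with rfl | ⟨a, rfl⟩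
    · exact hyz (by rw [← hsum, zero_add])
    rcases Set.mem_insert_iff.mp hy with rfl | ⟨b, rfl⟩
    · exact hxz (by rw [← hsum, add_zero])
    rcases Set.mem_insert_iff.mp hz with rfl | ⟨c, rfl⟩
    · -- pick f a + pick f b = 0
      cases hfa : f a <;> cases hfb : f b
      · -- both false : -a + -b = 0
        have ha' : pick f a = -(a : G) := by simp [pick, hfa]
        have hb' : pick f b = -(b : G) := by simp [pick, hfb]
        rw [ha', hb'] at hsum
        have hab : (a : G) + (b : G) = 0 := neg_eq_zero.mp (by rw [neg_add]; exact hsum)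
        have hab' : (a : G) = -(b : G) := add_eq_zero_iff_eq_neg.mp hab
        exact hRnotneg b.1 b.2 (hab' ▸ a.2)
      · -- -a + b = 0
        have ha' : pick f a = -(a : G) := by simp [pick, hfa]
        have hb' : pick f b = (b : G) := by simp [pick, hfb]
        rw [ha', hb'] at hsum
        have hab : a = b := Subtype.ext (neg_add_eq_zero.mp hsum)
        rw [hab, hfb] at hfa
        simp at hfa
      · -- a + -b = 0
        have ha' : pick f a = (a : G) := by simp [pick, hfa]
        have hb' : pick f b = -(b : G) := by simp [pick, hfb]
        rw [ha', hb'] at hsum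
        have hab : a = b := Subtype.ext (add_neg_eq_zero.mp hsum)
        rw [hab, hfb] at hfa
        simp at hfa
      · -- a + b = 0
        have ha' : pick f a = (a : G) := by simp [pick, hfa]
        have hb' : pick f b = (b : G) := by simp [pick, hfb]
        rw [ha', hb'] at hsum
        have hab' : (a : G) = -(b : G) := add_eq_zero_iff_eq_neg.mp hsum
        exact hRnotneg b.1 b.2 (hab' ▸ a.2)
    · exact hBsf _ (hpickB f a) _ (hpickB f b) (hsum ▸ hpickB f c)
  -- maximal extensions
  let T : (R → Bool) → {S : Set G // IsMaxDistSumFree S} := fun f =>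
    ⟨(exists_max_ext_aux13 (hSdsf f)).choose, (exists_max_ext_aux13 (hSdsf f)).choose_spec.2⟩
  have hST : ∀ f, S f ⊆ (T f).1 := fun f => (exists_max_ext_aux13 (hSdsf f)).choose_spec.1
  have hTinj : Function.Injective T := by
    intro f g hfg
    funext a
    by_contra hne
    have h1 : pick f a ∈ (T f).1 := hST f (Set.mem_insert_of_mem _ ⟨a, rfl⟩)
    have h2 : pick g a ∈ (T f).1 := by
      rw [hfg]; exact hST g (Set.mem_insert_of_mem _ ⟨a, rfl⟩)
    have h0 : (0 : G) ∈ (T f).1 := hST f (Set.mem_insert _ _)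
    have hpm : pick f a = - pick g a := by
      cases hfa : f a <;> cases hga : g a <;> rw [hfa, hga] at hne <;>
        first
          | exact absurd rfl hne
          | simp [pick, hfa, hga]
    have hxy : pick f a ≠ pick g a := by
      rw [hpm]
      exact fun h => hBnn _ (hpickB g a) h.symm
    exact (T f).2.1 _ h1 _ h2 _ h0 hxy (hpick0 f a) (hpick0 g a)
      (by rw [hpm, neg_add_cancel])
  have hcount : 2 ^ Nat.card R ≤ Nat.card {S : Set G // IsMaxDistSumFree S} := by
    have h1 := Nat.card_le_card_of_injective T hTinj
    rwa [Nat.card_fun, Nat.card_eq_fintype_card, Fintype.card_bool] at h1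
  -- arithmetic conclusion
  have key : Fintype.card G * (p + 1) = 6 * p * Nat.card R := by
    have h2r : (k + 1) * Nat.card φ.ker = 2 * Nat.card R := by
      rw [← hcardB, hcardBR]
    calc Fintype.card G * (p + 1) = (Nat.card φ.ker * p) * (3 * k + 2 + 1) := by
          rw [hn, ← hpk]
      _ = p * (3 * ((k + 1) * Nat.card φ.ker)) := by ring
      _ = p * (3 * (2 * Nat.card R)) := by rw [h2r]
      _ = 6 * p * Nat.card R := by ring
  have hexp : ((Fintype.card G : ℝ) * (p + 1) / (3 * p)) / 2 = (Nat.card R : ℝ) := by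
    have hp0 : (p : ℝ) ≠ 0 := Nat.cast_ne_zero.mpr (by omega)
    have hkey : (Fintype.card G : ℝ) * (p + 1) = 6 * p * Nat.card R := by
      exact_mod_cast congrArg (Nat.cast : ℕ → ℝ) key
    rw [div_div, div_eq_iff (by positivity)]
    linear_combination hkey
  rw [hexp, Real.rpow_natCast]
  calc (2 : ℝ) ^ Nat.card R = ((2 ^ Nat.card R : ℕ) : ℝ) := by push_cast; ring
    _ ≤ (Nat.card {S : Set G // IsMaxDistSumFree S} : ℝ) := Nat.cast_le.mpr hcount
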